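/- For every positive integer n, the coefficient of q^n in 1 + 8·Σ_{k=1}^∞ q^k/(1+(-q)^k)^2 equals 8 times Σ_{d | n, 4 ∤ d} d. -/

import Mathlib

open Finset PowerSeries

/-- The formal variable as a power series over ℚ. -/
noncomputable def Q : PowerSeries ℚ := PowerSeries.X

/-- psSum f is the formal power series sum_{k=1}^∞ f k; since in all uses below the
k-th term has order at least k, the coefficient of q^n is sum_{k=1}^n coeff n (f k). -/
noncomputable def psSum (f : ℕ → PowerSeries ℚ) : PowerSeries ℚ :=
  PowerSeries.mk fun n => ∑ k ∈ Finset.Icc 1 n, PowerSeries.coeff n (f k)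

/-- psProd f is the formal power series prod_{j=1}^∞ f j; since in all uses below
f j = 1 + O(q^j), the coefficient of q^n is that of prod_{j=1}^n f j. -/
noncomputable def psProd (f : ℕ → PowerSeries ℚ) : PowerSeries ℚ :=
  PowerSeries.mk fun n => PowerSeries.coeff n (∏ j ∈ Finset.Icc 1 n, f j)

/-- coefficient of the inverse of (1+(-q)^k)^2 -/
noncomputable def gc (k j : ℕ) : ℚ :=
  if k ∣ j then ((j / k : ℕ) + 1 : ℚ) * (-1) ^ ((j / k) * (k + 1)) else 0

noncomputable def gps (k : ℕ) : PowerSeries ℚ := PowerSeries.mk (gc k)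

lemma sq_expand (k : ℕ) :
    ((1 + (-PowerSeries.X) ^ k : PowerSeries ℚ)) ^ 2
      = 1 + PowerSeries.C (2 * (-1) ^ k) * PowerSeries.X ^ k + PowerSeries.X ^ (2 * k) := by
  have hneg : ((-PowerSeries.X : PowerSeries ℚ)) ^ k
      = PowerSeries.C ((-1) ^ k) * PowerSeries.X ^ k := by
    rw [neg_pow]
    congr 1
    rw [map_pow, map_neg, map_one]
  have h1 : (PowerSeries.C ((-1 : ℚ) ^ k)) ^ 2 = 1 := by
    rw [← map_pow, ← pow_mul, Even.neg_one_pow ⟨k, by ring⟩, map_one]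
  have h2 : PowerSeries.C (2 * (-1 : ℚ) ^ k) = 2 * PowerSeries.C ((-1 : ℚ) ^ k) := by
    rw [map_mul, map_ofNat]
  rw [hneg, h2, add_sq, mul_pow, h1, ← pow_mul]
  ring

lemma gps_mul_eq_one (k : ℕ) (hk : 1 ≤ k) :
    gps k * ((1 + (-PowerSeries.X) ^ k : PowerSeries ℚ)) ^ 2 = 1 := by
  ext j
  rw [sq_expand, mul_add, mul_add, mul_one, map_add, map_add,
    ← mul_assoc, mul_comm (gps k) (PowerSeries.C (2 * (-1) ^ k)), mul_assoc,
    PowerSeries.coeff_C_mul, PowerSeries.coeff_mul_X_pow', PowerSeries.coeff_mul_X_pow']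
  simp only [gps, PowerSeries.coeff_mk]
  by_cases hdvd : k ∣ j
  · obtain ⟨m, rfl⟩ := hdvd
    match m with
    | 0 =>
      simp only [Nat.mul_zero]
      rw [if_neg (by omega : ¬ k ≤ 0), if_neg (by omega : ¬ 2 * k ≤ 0)]
      simp [gc]
    | 1 =>
      rw [Nat.mul_one, if_pos (le_refl k), if_neg (by omega : ¬ 2 * k ≤ k), Nat.sub_self]
      have h1 : gc k 0 = 1 := by simp [gc]
      have h2 : gc k k = 2 * (-1 : ℚ) ^ (k + 1) := by
        rw [gc, if_pos (dvd_refl k), Nat.div_self (by omega : 0 < k), one_mul]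
        norm_num
      rw [h1, h2, PowerSeries.coeff_one, if_neg (by omega : ¬ k = 0), pow_succ]
      ring
    | (p + 2) =>
      have hkj : k ≤ k * (p + 2) := by nlinarith
      have h2kj : 2 * k ≤ k * (p + 2) := by nlinarith
      rw [if_pos hkj, if_pos h2kj]
      have e1 : k * (p + 2) - k = k * (p + 1) := by ring_nf; omega
      have e2 : k * (p + 2) - 2 * k = k * p := by ring_nf; omega
      rw [e1, e2]
      have hkpos : 0 < k := hk
      simp only [gc, if_pos (Dvd.intro _ rfl), Nat.mul_div_cancel_left _ hkpos]
      have hc : PowerSeries.coeff (k * (p + 2)) (1 : PowerSeries ℚ) = 0 := by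
        rw [PowerSeries.coeff_one, if_neg (by positivity)]
      rw [hc]
      set a : ℚ := (-1) ^ (k + 1) with ha_def
      have hA : ((-1 : ℚ)) ^ ((p + 2) * (k + 1)) = a ^ (p + 2) := by
        rw [ha_def, ← pow_mul, mul_comm]
      have hB : ((-1 : ℚ)) ^ ((p + 1) * (k + 1)) = a ^ (p + 1) := by
        rw [ha_def, ← pow_mul, mul_comm]
      have hC : ((-1 : ℚ)) ^ (p * (k + 1)) = a ^ p := by
        rw [ha_def, ← pow_mul, mul_comm]
      rw [hA, hB, hC]
      have ha2 : a ^ 2 = 1 := by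
        rw [ha_def, ← pow_mul]
        exact Even.neg_one_pow ⟨k + 1, by ring⟩
      have hka : (-1 : ℚ) ^ k * a = -1 := by
        rw [ha_def, pow_succ, ← mul_assoc, ← pow_add]
        have : Even (k + k) := ⟨k, rfl⟩
        rw [this.neg_one_pow]; ring
      push_cast
      linear_combination (((p : ℚ) + 3) * a ^ p) * ha2 + (2 * ((p : ℚ) + 2) * a ^ p) * hka
  · have hj0 : j ≠ 0 := fun h => hdvd (h ▸ dvd_zero k)
    have g1 : gc k j = 0 := if_neg hdvd
    have g2 : (if k ≤ j then gc k (j - k) else 0) = 0 := by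
      split_ifs with h
      · exact if_neg (fun hd => hdvd (by
          have := Nat.dvd_add hd (dvd_refl k); rwa [Nat.sub_add_cancel h] at this))
      · rfl
    have g3 : (if 2 * k ≤ j then gc k (j - 2 * k) else 0) = 0 := by
      split_ifs with h
      · exact if_neg (fun hd => hdvd (by
          have := Nat.dvd_add hd ((dvd_refl k).mul_left 2)
          rwa [Nat.sub_add_cancel h] at this))
      · rfl
    rw [g1, g2, g3, PowerSeries.coeff_one, if_neg hj0]
    ring

lemma inv_eq_gps (k : ℕ) (hk : 1 ≤ k) :
    (((1 + (-PowerSeries.X) ^ k : PowerSeries ℚ)) ^ 2)⁻¹ = gps k := by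
  rw [PowerSeries.inv_eq_iff_mul_eq_one]
  · exact gps_mul_eq_one k hk
  · rw [sq_expand]
    simp [PowerSeries.coeff_zero_eq_constantCoeff, constantCoeff_X,
      zero_pow (by omega : k ≠ 0), zero_pow (by omega : 2 * k ≠ 0)]

lemma key_bij (n : ℕ) (hn : 0 < n) :
    ∑ d ∈ n.divisors.filter (fun d => 4 ∣ d), (d : ℚ)
      = ∑ d ∈ n.divisors.filter (fun d => 2 ∣ d ∧ 2 ∣ (n / d)), (2 * d : ℚ) := by
  symm
  refine Finset.sum_nbij' (fun d => 2 * d) (fun d => d / 2) ?_ ?_ ?_ ?_ ?_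
  · intro d hd
    simp only [Finset.mem_filter, Nat.mem_divisors] at hd ⊢
    obtain ⟨⟨hdn, hn0⟩, h2d, h2nd⟩ := hd
    obtain ⟨t, ht⟩ := h2nd
    refine ⟨⟨?_, hn0⟩, ?_⟩
    · have hmul : d * (n / d) = n := Nat.mul_div_cancel' hdn
      exact ⟨t, by rw [← hmul, ht]; ring⟩
    · obtain ⟨u, rfl⟩ := h2d
      exact ⟨u, by ring⟩
  · intro d hd
    simp only [Finset.mem_filter, Nat.mem_divisors] at hd ⊢
    obtain ⟨⟨hdn, hn0⟩, h4d⟩ := hd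
    obtain ⟨u, rfl⟩ := h4d
    have hu : u ≠ 0 := by rintro rfl; simp at hdn; omega
    obtain ⟨s, hs⟩ := hdn
    have hq : 4 * u / 2 = 2 * u := by omega
    rw [hq]
    refine ⟨⟨⟨2 * s, by rw [hs]; ring⟩, hn0⟩, ⟨u, rfl⟩, ?_⟩
    have hdiv : n / (2 * u) = 2 * s := by
      rw [hs, show 4 * u * s = 2 * u * (2 * s) by ring,
        Nat.mul_div_cancel_left _ (by omega : 0 < 2 * u)]
    rw [hdiv]
    exact ⟨s, rfl⟩
  · intro a _; show 2 * a / 2 = a; omega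
  · intro a ha
    simp only [Finset.mem_filter, Nat.mem_divisors] at ha
    obtain ⟨-, h4⟩ := ha
    show 2 * (a / 2) = a; omega
  · intro a _; push_cast; ring

lemma divisor_identity (n : ℕ) (hn : 0 < n) :
    ∑ d ∈ n.divisors, (d : ℚ) * (-1) ^ ((d - 1) * (n / d + 1))
      = ∑ d ∈ n.divisors.filter (fun d => ¬ (4 ∣ d)), (d : ℚ) := by
  classical
  have hsplitL := Finset.sum_filter_add_sum_filter_not n.divisors
    (fun d => 2 ∣ d ∧ 2 ∣ (n / d))
    (fun d => (d : ℚ) * (-1) ^ ((d - 1) * (n / d + 1)))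
  have hsplitR := Finset.sum_filter_add_sum_filter_not n.divisors (fun d => 4 ∣ d)
    (fun d => (d : ℚ))
  have hsplit2 := Finset.sum_filter_add_sum_filter_not n.divisors
    (fun d => 2 ∣ d ∧ 2 ∣ (n / d)) (fun d => (d : ℚ))
  have hA : ∑ d ∈ n.divisors.filter (fun d => 2 ∣ d ∧ 2 ∣ (n / d)),
        (d : ℚ) * (-1) ^ ((d - 1) * (n / d + 1))
      = -∑ d ∈ n.divisors.filter (fun d => 2 ∣ d ∧ 2 ∣ (n / d)), (d : ℚ) := by
    rw [← Finset.sum_neg_distrib]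
    refine Finset.sum_congr rfl fun d hd => ?_
    simp only [Finset.mem_filter, Nat.mem_divisors] at hd
    obtain ⟨⟨hdn, hn0⟩, ⟨t, rfl⟩, ⟨s, hs⟩⟩ := hd
    have ht : 1 ≤ t := by
      rcases Nat.eq_zero_or_pos t with h | h
      · subst h; simp at hdn; omega
      · exact h
    have hodd : Odd ((2 * t - 1) * (n / (2 * t) + 1)) := by
      refine Odd.mul ⟨t - 1, by omega⟩ ?_
      rw [hs]; exact ⟨s, by ring⟩
    rw [hodd.neg_one_pow]; ring
  have hB : ∑ d ∈ n.divisors.filter (fun d => ¬ (2 ∣ d ∧ 2 ∣ (n / d))),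
        (d : ℚ) * (-1) ^ ((d - 1) * (n / d + 1))
      = ∑ d ∈ n.divisors.filter (fun d => ¬ (2 ∣ d ∧ 2 ∣ (n / d))), (d : ℚ) := by
    refine Finset.sum_congr rfl fun d hd => ?_
    simp only [Finset.mem_filter, Nat.mem_divisors] at hd
    obtain ⟨⟨hdn, hn0⟩, hnp⟩ := hd
    have heven : Even ((d - 1) * (n / d + 1)) := by
      by_cases h2 : 2 ∣ d
      · have h2nd : ¬ 2 ∣ (n / d) := fun h => hnp ⟨h2, h⟩
        refine Even.mul_left ?_ _
        rcases Nat.even_or_odd (n / d) with he | ho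
        · exact absurd he.two_dvd h2nd
        · obtain ⟨s, hs⟩ := ho; exact ⟨s + 1, by omega⟩
      · refine Even.mul_right ?_ _
        rcases Nat.even_or_odd d with he | ho
        · exact absurd he.two_dvd h2
        · obtain ⟨s, hs⟩ := ho; exact ⟨s, by omega⟩
    rw [heven.neg_one_pow]; ring
  have hbij := key_bij n hn
  have h2 : ∑ d ∈ n.divisors.filter (fun d => 2 ∣ d ∧ 2 ∣ (n / d)), (2 * d : ℚ)
      = 2 * ∑ d ∈ n.divisors.filter (fun d => 2 ∣ d ∧ 2 ∣ (n / d)), (d : ℚ) := by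
    rw [Finset.mul_sum]
  rw [← hsplitL, hA, hB]
  linarith [hsplitR, hsplit2, hbij, h2]

theorem coeff_rhs_eq_divisor_sum (n : ℕ) (hn : 0 < n) :
    PowerSeries.coeff n (1 + 8 * psSum (fun k => Q ^ k * ((1 + (-Q) ^ k) ^ 2)⁻¹))
      = 8 * ∑ d ∈ n.divisors.filter (fun d => ¬ (4 ∣ d)), (d : ℚ) := by
  have h8 : (8 : PowerSeries ℚ) = PowerSeries.C 8 := by
    rw [map_ofNat]
  rw [map_add, h8, PowerSeries.coeff_C_mul, PowerSeries.coeff_one, if_neg hn.ne']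
  simp only [psSum, PowerSeries.coeff_mk, Q]
  have hterm : ∀ k ∈ Finset.Icc 1 n,
      PowerSeries.coeff n
        (PowerSeries.X ^ k * (((1 + (-PowerSeries.X) ^ k : PowerSeries ℚ)) ^ 2)⁻¹)
        = gc k (n - k) := by
    intro k hk
    simp only [Finset.mem_Icc] at hk
    rw [inv_eq_gps k hk.1, mul_comm, PowerSeries.coeff_mul_X_pow', if_pos hk.2]
    simp [gps]
  rw [Finset.sum_congr rfl hterm, zero_add]
  have hsub : n.divisors ⊆ Finset.Icc 1 n := by
    intro d hd
    simp only [Nat.mem_divisors] at hd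
    simp only [Finset.mem_Icc]
    exact ⟨Nat.pos_of_dvd_of_pos hd.1 hn, Nat.le_of_dvd hn hd.1⟩
  have hdsum : ∑ k ∈ Finset.Icc 1 n, gc k (n - k)
      = ∑ k ∈ n.divisors, ((n / k : ℕ) : ℚ) * (-1) ^ ((n / k - 1) * (k + 1)) := by
    rw [← Finset.sum_subset hsub]
    · refine Finset.sum_congr rfl fun k hk => ?_
      simp only [Nat.mem_divisors] at hk
      obtain ⟨⟨m, rfl⟩, hn0⟩ := hk
      have hkpos : 0 < k := Nat.pos_of_ne_zero (by rintro rfl; exact hn0 (zero_mul m))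
      have hmpos : 0 < m := Nat.pos_of_ne_zero (by rintro rfl; exact hn0 (mul_zero k))
      have hdvd : k ∣ k * m - k := ⟨m - 1, by rw [Nat.mul_sub]; omega⟩
      rw [gc, if_pos hdvd]
      have he : (k * m - k) / k = m - 1 := by
        rw [show k * m - k = k * (m - 1) by rw [Nat.mul_sub]; omega,
          Nat.mul_div_cancel_left _ hkpos]
      have hm : k * m / k = m := Nat.mul_div_cancel_left _ hkpos
      rw [he, hm]
      congr 1
      push_cast [Nat.cast_sub hmpos]
      ring
    · intro k hk hknd
      simp only [Finset.mem_Icc] at hk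
      simp only [Nat.mem_divisors, not_and_or] at hknd
      have hkn : ¬ k ∣ n := by
        rcases hknd with h | h
        · exact h
        · exact absurd hn.ne' h
      rw [gc, if_neg]
      intro hd
      exact hkn (by
        have := Nat.dvd_add hd (dvd_refl k)
        rwa [Nat.sub_add_cancel hk.2] at this)
  rw [hdsum]
  have hflip : ∑ k ∈ n.divisors, ((n / k : ℕ) : ℚ) * (-1) ^ ((n / k - 1) * (k + 1))
      = ∑ d ∈ n.divisors, (d : ℚ) * (-1) ^ ((d - 1) * (n / d + 1)) := by
    rw [← Nat.sum_div_divisors n (fun d => (d : ℚ) * (-1) ^ ((d - 1) * (n / d + 1)))]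
    refine Finset.sum_congr rfl fun d hd => ?_
    simp only [Nat.mem_divisors] at hd
    rw [Nat.div_div_self hd.1 hd.2]
  rw [hflip, divisor_identity n hn]
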